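/- ▲-bisimilarity implies ▲-equivalence: if pointed models (M,s) and (M',s') are ▲-bisimilar, then for every formula φ of the language L(▲), M,s ⊨ φ iff M',s' ⊨ φ. -/

import Mathlib

structure Model where
  W : Type
  ne : Nonempty W
  R : W → W → Prop
  V : ℕ → W → Prop

/-- Disjoint union of two models. -/
def dsum (M N : Model) : Model where
  W := M.W ⊕ N.W
  ne := ⟨Sum.inl M.ne.some⟩
  R := fun a b =>
    match a, b with
    | .inl x, .inl y => M.R x y
    | .inr x, .inr y => N.R x y
    | _, _ => False
  V := fun n => Sum.elim (M.V n) (N.V n)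

/-- Z is a ▲-bisimulation on the model M. -/
def IsTriBisim (M : Model) (Z : M.W → M.W → Prop) : Prop :=
  (∃ a b, Z a b) ∧
  ∀ s s', Z s s' →
    (∀ n, M.V n s ↔ M.V n s') ∧
    (∀ t, M.R s t → ¬ Z s t → ∃ t', M.R s' t' ∧ Z t t') ∧
    (∀ t', M.R s' t' → ¬ Z s' t' → ∃ t, M.R s t ∧ Z t t')

/-- (M,s) and (N,t) are ▲-bisimilar. -/
def TriBisimilar (M : Model) (s : M.W) (N : Model) (t : N.W) : Prop :=
  ∃ Z, IsTriBisim (dsum M N) Z ∧ Z (.inl s) (.inr t)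

/-- The language L(▲). -/
inductive Formula where
  | atom : ℕ → Formula
  | top : Formula
  | neg : Formula → Formula
  | and : Formula → Formula → Formula
  | tri : Formula → Formula

/-- Satisfaction of L(▲)-formulas. -/
def sat (M : Model) : M.W → Formula → Prop
  | s, .atom n => M.V n s
  | _, .top => True
  | s, .neg φ => ¬ sat M s φ
  | s, .and φ ψ => sat M s φ ∧ sat M s ψ
  | s, .tri φ =>
      (sat M s φ → ∀ t, M.R s t → sat M t φ) ∧
      (¬ sat M s φ → ∀ t, M.R s t → ¬ sat M t φ)


lemma sat_tri_iff (M : Model) (s : M.W) (φ : Formula) :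
    sat M s (.tri φ) ↔ ∀ t, M.R s t → (sat M s φ ↔ sat M t φ) := by
  constructor
  · rintro ⟨h1, h2⟩ t ht
    constructor
    · intro hs; exact h1 hs t ht
    · intro htφ; by_contra hs; exact h2 hs t ht htφ
  · intro h
    constructor
    · intro hs t ht; exact (h t ht).mp hs
    · intro hs t ht htφ; exact hs ((h t ht).mpr htφ)

lemma bisim_equiv (K : Model) (Z : K.W → K.W → Prop) (hZ : IsTriBisim K Z) :
    ∀ φ : Formula, ∀ a b, Z a b → (sat K a φ ↔ sat K b φ) := by
  intro φ
  induction φ with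
  | atom n => intro a b hab; exact ((hZ.2 a b hab).1 n)
  | top => intro a b _; simp [sat]
  | neg φ ih => intro a b hab; simp only [sat]; exact not_congr (ih a b hab)
  | and φ ψ ih1 ih2 =>
      intro a b hab; simp only [sat]
      exact and_congr (ih1 a b hab) (ih2 a b hab)
  | tri φ ih =>
      intro a b hab
      rw [sat_tri_iff, sat_tri_iff]
      have hab' := hZ.2 a b hab
      have hφ : sat K a φ ↔ sat K b φ := ih a b hab
      constructor
      · intro ha t' ht'
        by_cases hbt : Z b t'
        · exact ih b t' hbt
        · obtain ⟨u, hu, hZu⟩ := hab'.2.2 t' ht' hbt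
          calc sat K b φ ↔ sat K a φ := hφ.symm
            _ ↔ sat K u φ := ha u hu
            _ ↔ sat K t' φ := ih u t' hZu
      · intro hb t ht
        by_cases hat : Z a t
        · exact ih a t hat
        · obtain ⟨u, hu, hZu⟩ := hab'.2.1 t ht hat
          calc sat K a φ ↔ sat K b φ := hφ
            _ ↔ sat K u φ := hb u hu
            _ ↔ sat K t φ := (ih t u hZu).symm

lemma sat_inl (M N : Model) : ∀ φ : Formula, ∀ s : M.W,
    sat (dsum M N) (.inl s) φ ↔ sat M s φ := by
  intro φ
  induction φ with
  | atom n => intro s; simp [sat, dsum]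
  | top => intro s; simp [sat]
  | neg φ ih => intro s; simp only [sat]; exact not_congr (ih s)
  | and φ ψ ih1 ih2 => intro s; simp only [sat]; exact and_congr (ih1 s) (ih2 s)
  | tri φ ih =>
      intro s
      refine (sat_tri_iff (dsum M N) (.inl s) φ).trans ?_
      rw [sat_tri_iff]
      constructor
      · intro h t ht
        have := h (.inl t) (by simpa [dsum] using ht)
        rw [ih s, ih t] at this; exact this
      · intro h t ht
        match t with
        | .inl t => rw [ih s, ih t]; exact h t (by simpa [dsum] using ht)
        | .inr t => simp [dsum] at ht

lemma sat_inr (M N : Model) : ∀ φ : Formula, ∀ s : N.W,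
    sat (dsum M N) (.inr s) φ ↔ sat N s φ := by
  intro φ
  induction φ with
  | atom n => intro s; simp [sat, dsum]
  | top => intro s; simp [sat]
  | neg φ ih => intro s; simp only [sat]; exact not_congr (ih s)
  | and φ ψ ih1 ih2 => intro s; simp only [sat]; exact and_congr (ih1 s) (ih2 s)
  | tri φ ih =>
      intro s
      refine (sat_tri_iff (dsum M N) (.inr s) φ).trans ?_
      rw [sat_tri_iff]
      constructor
      · intro h t ht
        have := h (.inr t) (by simpa [dsum] using ht)
        rw [ih s, ih t] at this; exact this
      · intro h t ht
        match t with
        | .inr t => rw [ih s, ih t]; exact h t (by simpa [dsum] using ht)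
        | .inl t => simp [dsum] at ht

theorem stmt13 (M N : Model) (s : M.W) (t : N.W)
    (h : TriBisimilar M s N t) :
    ∀ φ : Formula, sat M s φ ↔ sat N t φ := by
  obtain ⟨Z, hZ, hst⟩ := h
  intro φ
  have := bisim_equiv (dsum M N) Z hZ φ _ _ hst
  rw [sat_inl, sat_inr] at this
  exact this
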